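/- Let f : ℝ^d → ℝ have compact support, and let v₀ : ℝ → ℝ be such that u·v₀ ∈ L^1(ℝ) ∩ L^2(ℝ), where u(x) = x. Define v₁(x) = ∫_{supp f} |f(s)|^{-1} v₀(x / f(s)) ds. Then u·v₁ ∈ L^1(ℝ) ∩ L^2(ℝ), with ‖u v₁‖_{L^k(ℝ)} ≤ ‖u v₀‖_{L^k(ℝ)} · ∫_{supp f} |f(s)|^{1/k} ds for k = 1, 2. -/

import Mathlib

open MeasureTheory

open scoped ENNReal

namespace UV1Aux

/-- Change of variables `x ↦ x / c` for lintegrals on `ℝ`. -/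
lemma lintegral_comp_div (φ : ℝ → ℝ≥0∞) (hφ : Measurable φ) {c : ℝ} (hc : c ≠ 0) :
    ∫⁻ x, φ (x / c) = ENNReal.ofReal |c| * ∫⁻ y, φ y := by
  have h1 : (fun x : ℝ => φ (x / c)) = fun x => φ (c⁻¹ * x) := by
    funext x; rw [div_eq_inv_mul]
  rw [h1, ← lintegral_map hφ (measurable_const_mul c⁻¹),
    Real.map_volume_mul_left (inv_ne_zero hc), inv_inv, lintegral_smul_measure, smul_eq_mul]

/-- Minkowski's integral inequality for exponent 2, in `ℝ≥0∞` form. -/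
lemma mink2 {α : Type*} [MeasurableSpace α] (ν : Measure α) [SFinite ν]
    (G : α → ℝ → ℝ≥0∞) (hG : Measurable (Function.uncurry G)) :
    ∫⁻ x : ℝ, (∫⁻ s, G s x ∂ν) ^ (2 : ℝ) ≤
      (∫⁻ s, (∫⁻ x : ℝ, (G s x) ^ (2 : ℝ)) ^ (1 / 2 : ℝ) ∂ν) ^ (2 : ℝ) := by
  have hGs : ∀ s, Measurable (G s) := fun s => hG.comp measurable_prodMk_left
  have hGx : ∀ x, Measurable (fun s => G s x) := fun x =>
    hG.comp (measurable_id.prodMk measurable_const)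
  set A : α → ℝ≥0∞ := fun s => (∫⁻ x : ℝ, (G s x) ^ (2 : ℝ)) ^ (1 / 2 : ℝ) with hA_def
  have hGsq : Measurable fun p : α × ℝ => (Function.uncurry G p) ^ (2 : ℝ) :=
    hG.pow_const _
  have hA : Measurable A := (Measurable.lintegral_prod_right' hGsq).pow_const _
  have step1 : ∀ x : ℝ, (∫⁻ s, G s x ∂ν) ^ (2 : ℝ)
      = ∫⁻ s, ∫⁻ t, G s x * G t x ∂ν ∂ν := by
    intro x
    rw [ENNReal.rpow_two, sq, ← lintegral_mul_const _ (hGx x)]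
    exact lintegral_congr fun s => (lintegral_const_mul _ (hGx x)).symm
  have hpq : (2 : ℝ).HolderConjugate 2 := Real.HolderConjugate.two_two
  calc
    ∫⁻ x : ℝ, (∫⁻ s, G s x ∂ν) ^ (2 : ℝ)
        = ∫⁻ x : ℝ, ∫⁻ s, ∫⁻ t, G s x * G t x ∂ν ∂ν := lintegral_congr step1
    _ = ∫⁻ s, (∫⁻ x : ℝ, ∫⁻ t, G s x * G t x ∂ν) ∂ν := by
        have hm : Measurable fun p : ℝ × α => ∫⁻ t, G p.2 p.1 * G t p.1 ∂ν :=
          Measurable.lintegral_prod_right'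
            ((hG.comp ((measurable_fst.snd).prodMk measurable_fst.fst)).mul
              (hG.comp (measurable_snd.prodMk measurable_fst.fst)))
        exact lintegral_lintegral_swap (μ := (volume : Measure ℝ)) hm.aemeasurable
    _ = ∫⁻ s, ∫⁻ t, (∫⁻ x : ℝ, G s x * G t x) ∂ν ∂ν := by
        refine lintegral_congr fun s => ?_
        refine lintegral_lintegral_swap (μ := (volume : Measure ℝ)) ?_
        exact (((hGs s).comp measurable_fst).mul
          (hG.comp (measurable_snd.prodMk measurable_fst))).aemeasurable
    _ ≤ ∫⁻ s, ∫⁻ t, A s * A t ∂ν ∂ν := by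
        refine lintegral_mono fun s => lintegral_mono fun t => ?_
        have := ENNReal.lintegral_mul_le_Lp_mul_Lq (volume : Measure ℝ) hpq
          (hGs s).aemeasurable (hGs t).aemeasurable
        simpa [hA_def] using this
    _ = (∫⁻ s, A s ∂ν) ^ (2 : ℝ) := by
        rw [ENNReal.rpow_two, sq, ← lintegral_mul_const _ hA]
        exact (lintegral_congr fun s => (lintegral_const_mul _ hA).symm).symm

end UV1Aux

/-- If `f` has compact support and `u·v₀ ∈ L¹(ℝ) ∩ L²(ℝ)` (with `u(x) = x`), then for
`v₁(x) = ∫_{supp f} |f(s)|⁻¹ v₀(x / f(s)) ds` one has `u·v₁ ∈ L¹(ℝ) ∩ L²(ℝ)` with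
`‖u v₁‖_{L^k} ≤ ‖u v₀‖_{L^k} ∫_{supp f} |f(s)|^{1/k} ds` for `k = 1, 2`. -/
theorem uv1_memLp {d : ℕ} (f : (Fin d → ℝ) → ℝ) (v₀ : ℝ → ℝ)
    (hf : Measurable f) (hcs : HasCompactSupport f)
    (hv₀ : Measurable v₀)
    (h1 : MemLp (fun x => x * v₀ x) 1 (volume : Measure ℝ))
    (h2 : MemLp (fun x => x * v₀ x) 2 (volume : Measure ℝ))
    (hfi1 : IntegrableOn (fun s => |f s|) (Function.support f))
    (hfi2 : IntegrableOn (fun s => Real.sqrt |f s|) (Function.support f))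
    (v₁ : ℝ → ℝ)
    (hv₁ : ∀ x, v₁ x = ∫ s in Function.support f, |f s|⁻¹ * v₀ (x / f s)) :
    MemLp (fun x => x * v₁ x) 1 (volume : Measure ℝ) ∧
    MemLp (fun x => x * v₁ x) 2 (volume : Measure ℝ) ∧
    eLpNorm (fun x => x * v₁ x) 1 (volume : Measure ℝ) ≤
      eLpNorm (fun x => x * v₀ x) 1 (volume : Measure ℝ) *
        ENNReal.ofReal (∫ s in Function.support f, |f s|) ∧
    eLpNorm (fun x => x * v₁ x) 2 (volume : Measure ℝ) ≤
      eLpNorm (fun x => x * v₀ x) 2 (volume : Measure ℝ) *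
        ENNReal.ofReal (∫ s in Function.support f, Real.sqrt |f s|) := by
  classical
  set S := Function.support f with hS_def
  have hS : MeasurableSet S := measurableSet_support hf
  set ν : Measure (Fin d → ℝ) := volume.restrict S with hν_def
  set h : ℝ → ℝ := fun y => y * v₀ y with hh_def
  have hh : Measurable h := measurable_id.mul hv₀
  set g : (Fin d → ℝ) → ℝ → ℝ := fun s x => x * (|f s|⁻¹ * v₀ (x / f s)) with hg_def
  have hdiv : Measurable fun p : (Fin d → ℝ) × ℝ => p.2 / f p.1 :=
    measurable_snd.div (hf.comp measurable_fst)
  have hgm : Measurable (Function.uncurry g) :=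
    measurable_snd.mul (((hf.comp measurable_fst).abs.inv).mul (hv₀.comp hdiv))
  set G : (Fin d → ℝ) → ℝ → ℝ≥0∞ := fun s x => (‖g s x‖₊ : ℝ≥0∞) with hG_def
  have hGm : Measurable (Function.uncurry G) := hgm.enorm
  have hxv : ∀ x : ℝ, x * v₁ x = ∫ s, g s x ∂ν := by
    intro x
    rw [hv₁ x, ← integral_const_mul]
  have hptwise : ∀ x : ℝ, (‖x * v₁ x‖₊ : ℝ≥0∞) ≤ ∫⁻ s, G s x ∂ν := by
    intro x
    rw [hxv x]
    exact enorm_integral_le_lintegral_enorm _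
  have hgh : ∀ s ∈ S, ∀ x : ℝ, (‖g s x‖₊ : ℝ≥0∞) = (‖h (x / f s)‖₊ : ℝ≥0∞) := by
    intro s hs x
    rw [← enorm_eq_nnnorm, ← enorm_eq_nnnorm, Real.enorm_eq_ofReal_abs, Real.enorm_eq_ofReal_abs]
    congr 1
    simp only [hg_def, hh_def, abs_mul, abs_div, abs_inv, abs_abs]
    rw [div_eq_mul_inv]
    ring
  have hghG : ∀ s ∈ S, ∀ x : ℝ, G s x = (‖h (x / f s)‖₊ : ℝ≥0∞) := hgh
  have N1ne : eLpNorm h 1 volume ≠ ⊤ := h1.2.ne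
  have N2ne : eLpNorm h 2 volume ≠ ⊤ := h2.2.ne
  have hL1 : ∀ s ∈ S, ∫⁻ x, G s x = ENNReal.ofReal |f s| * eLpNorm h 1 volume := by
    intro s hs
    have hc : f s ≠ 0 := hs
    have h0 : ∫⁻ x, G s x = ∫⁻ x, (‖h (x / f s)‖₊ : ℝ≥0∞) :=
      lintegral_congr fun x => hgh s hs x
    rw [h0, UV1Aux.lintegral_comp_div (fun y => (‖h y‖₊ : ℝ≥0∞)) hh.enorm hc]
    simp only [eLpNorm_one_eq_lintegral_enorm, enorm_eq_nnnorm]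
  have hL2 : ∀ s ∈ S, (∫⁻ x, G s x ^ (2 : ℝ)) ^ (1 / 2 : ℝ)
      = ENNReal.ofReal (Real.sqrt |f s|) * eLpNorm h 2 volume := by
    intro s hs
    have hc : f s ≠ 0 := hs
    have h0 : ∫⁻ x, G s x ^ (2 : ℝ) = ∫⁻ x, ((‖h (x / f s)‖₊ : ℝ≥0∞)) ^ (2 : ℝ) :=
      lintegral_congr fun x => by rw [hghG s hs x]
    have h1' : ∫⁻ x, ((‖h (x / f s)‖₊ : ℝ≥0∞)) ^ (2 : ℝ)
        = ENNReal.ofReal |f s| * ∫⁻ y, (‖h y‖₊ : ℝ≥0∞) ^ (2 : ℝ) :=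
      UV1Aux.lintegral_comp_div (fun y => (‖h y‖₊ : ℝ≥0∞) ^ (2 : ℝ))
        (hh.enorm.pow_const _) hc
    rw [h0, h1', ENNReal.mul_rpow_of_nonneg _ _ (by norm_num : (0:ℝ) ≤ 1/2)]
    congr 1
    · rw [ENNReal.ofReal_rpow_of_nonneg (abs_nonneg _) (by norm_num : (0:ℝ) ≤ 1/2),
        Real.sqrt_eq_rpow]
    · rw [eLpNorm_eq_lintegral_rpow_enorm_toReal (by norm_num) (by norm_num)]
      simp only [enorm_eq_nnnorm]
      norm_num
  -- measurability of `v₁`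
  have hw : Measurable (Function.uncurry fun (s : Fin d → ℝ) (x : ℝ) =>
      |f s|⁻¹ * v₀ (x / f s)) :=
    ((hf.comp measurable_fst).abs.inv).mul (hv₀.comp hdiv)
  have hv₁m : StronglyMeasurable v₁ := by
    have hv₁eq : v₁ = fun x => ∫ s, |f s|⁻¹ * v₀ (x / f s) ∂ν := funext hv₁
    rw [hv₁eq]
    exact hw.stronglyMeasurable.integral_prod_left
  have huv₁m : AEStronglyMeasurable (fun x => x * v₁ x) volume :=
    (measurable_id.stronglyMeasurable.mul hv₁m).aestronglyMeasurable
  have hswap : AEMeasurable (Function.uncurry fun (x : ℝ) s => G s x) (volume.prod ν) :=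
    (hGm.comp measurable_swap).aemeasurable
  -- k = 1 bound
  have hb1 : eLpNorm (fun x => x * v₁ x) 1 volume ≤
      eLpNorm h 1 volume * ENNReal.ofReal (∫ s, |f s| ∂ν) := by
    rw [eLpNorm_one_eq_lintegral_enorm]
    calc
      ∫⁻ x, (‖x * v₁ x‖₊ : ℝ≥0∞)
          ≤ ∫⁻ x, ∫⁻ s, G s x ∂ν := lintegral_mono hptwise
      _ = ∫⁻ s, (∫⁻ x, G s x) ∂ν := lintegral_lintegral_swap hswap
      _ = ∫⁻ s, ENNReal.ofReal |f s| * eLpNorm h 1 volume ∂ν := by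
          refine lintegral_congr_ae ?_
          filter_upwards [ae_restrict_mem hS] with s hs
          exact hL1 s hs
      _ = (∫⁻ s, ENNReal.ofReal |f s| ∂ν) * eLpNorm h 1 volume :=
          lintegral_mul_const' _ _ N1ne
      _ = eLpNorm h 1 volume * ENNReal.ofReal (∫ s, |f s| ∂ν) := by
          rw [← ofReal_integral_eq_lintegral_ofReal hfi1
            (Filter.Eventually.of_forall fun s => abs_nonneg _), mul_comm]
  -- k = 2 bound
  have hb2 : eLpNorm (fun x => x * v₁ x) 2 volume ≤
      eLpNorm h 2 volume * ENNReal.ofReal (∫ s, Real.sqrt |f s| ∂ν) := by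
    rw [eLpNorm_eq_lintegral_rpow_enorm_toReal (by norm_num) (by norm_num)]
    simp only [enorm_eq_nnnorm]
    have htr : ((2 : ℝ≥0∞)).toReal = (2 : ℝ) := by norm_num
    rw [htr]
    have key : ∫⁻ x, (‖x * v₁ x‖₊ : ℝ≥0∞) ^ (2 : ℝ) ≤
        (∫⁻ s, (∫⁻ x, G s x ^ (2 : ℝ)) ^ (1 / 2 : ℝ) ∂ν) ^ (2 : ℝ) := by
      refine le_trans (lintegral_mono fun x => ?_) (UV1Aux.mink2 ν G hGm)
      exact ENNReal.rpow_le_rpow (hptwise x) (by norm_num)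
    have key2 := ENNReal.rpow_le_rpow key (by norm_num : (0:ℝ) ≤ 1/2)
    rw [← ENNReal.rpow_mul] at key2
    norm_num at key2
    calc
      (∫⁻ x, (‖x * v₁ x‖₊ : ℝ≥0∞) ^ (2 : ℝ)) ^ (1 / (2:ℝ))
          ≤ ∫⁻ s, (∫⁻ x, G s x ^ (2 : ℝ)) ^ (1 / 2 : ℝ) ∂ν := by
            simpa using key2
      _ = ∫⁻ s, ENNReal.ofReal (Real.sqrt |f s|) * eLpNorm h 2 volume ∂ν := by
          refine lintegral_congr_ae ?_
          filter_upwards [ae_restrict_mem hS] with s hs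
          exact hL2 s hs
      _ = (∫⁻ s, ENNReal.ofReal (Real.sqrt |f s|) ∂ν) * eLpNorm h 2 volume :=
          lintegral_mul_const' _ _ N2ne
      _ = eLpNorm h 2 volume * ENNReal.ofReal (∫ s, Real.sqrt |f s| ∂ν) := by
          rw [← ofReal_integral_eq_lintegral_ofReal hfi2
            (Filter.Eventually.of_forall fun s => Real.sqrt_nonneg _), mul_comm]
  refine ⟨⟨huv₁m, lt_of_le_of_lt hb1 (ENNReal.mul_lt_top h1.2 ENNReal.ofReal_lt_top)⟩,
    ⟨huv₁m, lt_of_le_of_lt hb2 (ENNReal.mul_lt_top h2.2 ENNReal.ofReal_lt_top)⟩, hb1, hb2⟩
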